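/- arXiv:2102.13120 — 2 statements merged into one kernel-verified Lean document; each statement's English description precedes it below -/
import Mathlib

section
/- The rational function H(t) = (1 + t^3 + 4t^4 + 2t^5 + 4t^6 + t^7 + t^10) / ((1-t^2)^4 (1-t^3)^3 (1-t^4)) satisfies the Gorenstein functional equation H(1/t) = (-1)^8 · t^11 · H(t) as an identity of rational functions. -/
theorem hilbert_series_2hdm_gorenstein (H : ℚ → ℚ)
    (hH : ∀ t : ℚ, H t = (1 + t^3 + 4*t^4 + 2*t^5 + 4*t^6 + t^7 + t^10) /
      ((1 - t^2)^4 * (1 - t^3)^3 * (1 - t^4))) :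
    ∀ t : ℚ, t ≠ 0 → 1 - t^2 ≠ 0 →
      H (1 / t) = (-1)^8 * t^11 * H t := by
  intro t ht h2
  have h3 : (1 : ℚ) - t^3 ≠ 0 := by
    intro h
    apply h2
    have ht1 : t = 1 := by nlinarith [sq_nonneg (t - 1), sq_nonneg (t + 1)]
    rw [ht1]; ring
  have h4 : (1 : ℚ) - t^4 ≠ 0 := by
    intro h
    apply h2
    nlinarith [sq_nonneg (t^2 - 1), sq_nonneg (t^2 + 1)]
  have h2' : (1 : ℚ) - (1/t)^2 ≠ 0 := by
    intro h
    apply h2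
    have : t^2 * (1 - (1/t)^2) = t^2 - 1 := by field_simp
    rw [h, mul_zero] at this
    linarith
  have h3' : (1 : ℚ) - (1/t)^3 ≠ 0 := by
    intro h
    apply h3
    have : t^3 * (1 - (1/t)^3) = t^3 - 1 := by field_simp
    rw [h, mul_zero] at this
    linarith
  have h4' : (1 : ℚ) - (1/t)^4 ≠ 0 := by
    intro h
    apply h4
    have : t^4 * (1 - (1/t)^4) = t^4 - 1 := by field_simp
    rw [h, mul_zero] at this
    linarith
  rw [show ((-1:ℚ))^8 = 1 by norm_num, one_mul, hH, hH, ← mul_div_assoc, div_eq_div_iff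
    (mul_ne_zero (mul_ne_zero (pow_ne_zero 4 h2') (pow_ne_zero 3 h3')) h4')
    (mul_ne_zero (mul_ne_zero (pow_ne_zero 4 h2) (pow_ne_zero 3 h3)) h4)]
  field_simp
  ring
end

section
/- For the rational function H(t) = (1 + t^3 + 4t^4 + 2t^5 + 4t^6 + t^7 + t^10) / ((1-t^2)^4 (1-t^3)^3 (1-t^4)), the limit as t → 1 of (1-t)^8 · H(t) equals 7/864, and the Laurent expansion of H at t = 1 is H(t) = (7/864)/(1-t)^8 + (7/576)/(1-t)^7 + O((1-t)^{-6}). -/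
open Filter Topology

theorem hilbert_series_2hdm_laurent (H : ℝ → ℝ)
    (hH : ∀ t : ℝ, H t = (1 + t^3 + 4*t^4 + 2*t^5 + 4*t^6 + t^7 + t^10) /
      ((1 - t^2)^4 * (1 - t^3)^3 * (1 - t^4))) :
    Tendsto (fun t : ℝ => (1 - t)^8 * H t) (𝓝[≠] 1) (𝓝 (7/864)) ∧
    Tendsto (fun t : ℝ => (1 - t)^7 * (H t - (7/864) / (1 - t)^8)) (𝓝[≠] 1)
      (𝓝 (7/576)) := by
  set N : ℝ → ℝ := fun t => 1 + t^3 + 4*t^4 + 2*t^5 + 4*t^6 + t^7 + t^10 with hN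
  set Q : ℝ → ℝ := fun t => (1+t)^4 * (1+t+t^2)^3 * (1+t+t^2+t^3) with hQ
  set R : ℝ → ℝ := fun t => 857/864 + 89/96*t + 577/864*t^2 + 47/48*t^3 + 3133/864*t^4
      + 341/96*t^5 + 5*t^6 + 331/96*t^7 + 1187/864*t^8 + 1/48*t^9 + 287/864*t^10
      + 7/96*t^11 + 7/864*t^12 with hR
  have hpos : ∀ᶠ t : ℝ in 𝓝[≠] 1, (0 : ℝ) < t ∧ t ≠ 1 := by
    filter_upwards [nhdsWithin_le_nhds (eventually_gt_nhds (by norm_num : (0:ℝ) < 1)),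
      self_mem_nhdsWithin] with t h1 h2
    exact ⟨h1, h2⟩
  have key : ∀ t : ℝ, 0 < t → t ≠ 1 →
      ((1:ℝ)+t ≠ 0 ∧ 1+t+t^2 ≠ 0 ∧ 1+t+t^2+t^3 ≠ 0 ∧ 1 - t ≠ 0
        ∧ 1 - t^2 ≠ 0 ∧ 1 - t^3 ≠ 0 ∧ 1 - t^4 ≠ 0) := by
    intro t ht ht1
    have h1 : (0:ℝ) < 1 + t := by linarith
    have h2 : (0:ℝ) < 1 + t + t^2 := by positivity
    have h3 : (0:ℝ) < 1 + t + t^2 + t^3 := by positivity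
    have h4 : (1:ℝ) - t ≠ 0 := by
      intro h; apply ht1; linarith
    refine ⟨ne_of_gt h1, ne_of_gt h2, ne_of_gt h3, h4, ?_, ?_, ?_⟩
    · intro h; apply h4; have : (1-t)*(1+t) = 0 := by ring_nf; linarith [h]
      rcases mul_eq_zero.mp this with h' | h'; exact h'; exact absurd h' (ne_of_gt h1)
    · intro h; apply h4; have : (1-t)*(1+t+t^2) = 0 := by ring_nf; linarith [h]
      rcases mul_eq_zero.mp this with h' | h'; exact h'; exact absurd h' (ne_of_gt h2)
    · intro h; apply h4; have : (1-t)*(1+t+t^2+t^3) = 0 := by ring_nf; linarith [h]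
      rcases mul_eq_zero.mp this with h' | h'; exact h'; exact absurd h' (ne_of_gt h3)
  have hQ1 : Q 1 ≠ 0 := by norm_num [hQ]
  have hcontQ : Continuous Q := by fun_prop
  have hcontN : Continuous N := by fun_prop
  have hcontR : Continuous R := by fun_prop
  constructor
  · have h1 : Tendsto (fun t => N t / Q t) (𝓝[≠] (1:ℝ)) (𝓝 (N 1 / Q 1)) :=
      ((hcontN.continuousAt.div hcontQ.continuousAt hQ1).tendsto).mono_left nhdsWithin_le_nhds
    have hval : N 1 / Q 1 = 7/864 := by norm_num [hN, hQ]
    rw [hval] at h1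
    refine h1.congr' ?_
    filter_upwards [hpos] with t ⟨ht, ht1⟩
    obtain ⟨e1, e2, e3, e4, e5, e6, e7⟩ := key t ht ht1
    have hQt : Q t ≠ 0 := by simp only [hQ]; positivity
    rw [hH t]
    field_simp
    ring
  · have h1 : Tendsto (fun t => R t / Q t) (𝓝[≠] (1:ℝ)) (𝓝 (R 1 / Q 1)) :=
      ((hcontR.continuousAt.div hcontQ.continuousAt hQ1).tendsto).mono_left nhdsWithin_le_nhds
    have hval : R 1 / Q 1 = 7/576 := by norm_num [hR, hQ]
    rw [hval] at h1
    refine h1.congr' ?_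
    filter_upwards [hpos] with t ⟨ht, ht1⟩
    obtain ⟨e1, e2, e3, e4, e5, e6, e7⟩ := key t ht ht1
    have hQt : Q t ≠ 0 := by simp only [hQ]; positivity
    rw [hH t]
    simp only [hR, hQ, hN]
    field_simp
    ring
end
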